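/- Under the setup where N_5 = ∅, N_4 independent, edges in N_3 do not contact N_4, and D ∩ N_2 = ∅: if v_1, v_2 ∈ N_3 with N(v_1) ∩ N_4 = N(v_2) ∩ N_4 ⊇ {w_i, w_j} for distinct w_i, w_j ∈ N_4 with N(w_i) ∩ N_3 = N(w_j) ∩ N_3 = {v_1, v_2}, then G has no efficient dominating set D containing D_basis. -/
import Mathlib


open SimpleGraph

variable {V : Type*}

/-- The closed neighborhood of a vertex. -/
def closedNbhd (G : SimpleGraph V) (v : V) : Set V := insert v (G.neighborSet v)

/-- `D` is an efficient dominating set: every vertex has exactly one `D`-vertex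
in its closed neighborhood. -/
def IsEDS (G : SimpleGraph V) (D : Set V) : Prop :=
  ∀ v : V, ∃! d, d ∈ D ∧ d ∈ closedNbhd G v

/-- The distance (in `ℕ∞`) from a vertex to a set of vertices. -/
noncomputable def distToSet (G : SimpleGraph V) (S : Set V) (v : V) : ℕ∞ :=
  sInf ((fun d => G.edist v d) '' S)

/-- The `i`-th distance level of a vertex set. -/
noncomputable def lvl (G : SimpleGraph V) (S : Set V) (i : ℕ) : Set V :=
  {v | distToSet G S v = (i : ℕ∞)}

/-- `p` is an induced (chordless) path on `k` vertices in `G`. -/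
def IsInducedPath (G : SimpleGraph V) {k : ℕ} (p : Fin k → V) : Prop :=
  Function.Injective p ∧
    ∀ i j : Fin k, G.Adj (p i) (p j) ↔ (i.val + 1 = j.val ∨ j.val + 1 = i.val)

/-- `G` contains no induced path on 8 vertices. -/
def P8Free (G : SimpleGraph V) : Prop := ∀ p : Fin 8 → V, ¬ IsInducedPath G p

/-- `(X, Y)` is a bipartition of `G`. -/
structure Bipartition (G : SimpleGraph V) (X Y : Set V) : Prop where
  union : X ∪ Y = Set.univ
  disj : Disjoint X Y
  adj : ∀ ⦃u v : V⦄, G.Adj u v → (u ∈ X ∧ v ∈ Y) ∨ (u ∈ Y ∧ v ∈ X)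

private lemma distToSet_attained (G : SimpleGraph V) {S : Set V} (hS : S.Nonempty) (v : V) :
    ∃ d ∈ S, G.edist v d = distToSet G S v := by
  have hne : ((fun d => G.edist v d) '' S).Nonempty := hS.image _
  obtain ⟨d, hd, hd2⟩ := csInf_mem hne
  exact ⟨d, hd, hd2⟩

private lemma adj_distToSet_le (G : SimpleGraph V) {S : Set V} (hS : S.Nonempty) {u v : V}
    (h : G.Adj u v) : distToSet G S u ≤ distToSet G S v + 1 := by
  obtain ⟨d, hd, hed⟩ := distToSet_attained G hS v
  calc distToSet G S u ≤ G.edist u d := sInf_le ⟨d, hd, rfl⟩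
    _ ≤ G.edist u v + G.edist v d := G.edist_triangle
    _ = 1 + distToSet G S v := by rw [SimpleGraph.edist_eq_one_iff_adj.mpr h, hed]
    _ = distToSet G S v + 1 := add_comm _ _

private lemma lvl_adj (G : SimpleGraph V) {S : Set V} (hS : S.Nonempty) {u v : V} {n : ℕ}
    (hu : u ∈ lvl G S n) (h : G.Adj u v) :
    ∃ m : ℕ, v ∈ lvl G S m ∧ n ≤ m + 1 ∧ m ≤ n + 1 := by
  have hu' : distToSet G S u = (n : ℕ∞) := hu
  have h1 : distToSet G S v ≤ (n : ℕ∞) + 1 := by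
    have := adj_distToSet_le G hS h.symm
    rwa [hu'] at this
  have h2 : (n : ℕ∞) ≤ distToSet G S v + 1 := by
    have := adj_distToSet_le G hS h
    rwa [hu'] at this
  have hfin : distToSet G S v ≠ ⊤ := by
    intro htop
    rw [htop] at h1
    have hlt : (n : ℕ∞) + 1 < ⊤ := by
      have := ENat.coe_lt_top (n + 1); push_cast at this; exact this
    exact absurd (lt_of_le_of_lt h1 hlt) (lt_irrefl _)
  obtain ⟨m, hm⟩ := WithTop.ne_top_iff_exists.mp hfin
  refine ⟨m, hm.symm, ?_, ?_⟩
  · rw [← hm] at h2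
    have : (n : ℕ∞) ≤ ((m + 1 : ℕ) : ℕ∞) := by push_cast; exact h2
    exact_mod_cast this
  · rw [← hm] at h1
    have : ((m : ℕ) : ℕ∞) ≤ ((n + 1 : ℕ) : ℕ∞) := by push_cast; exact h1
    exact_mod_cast this

/-- under the standing assumptions, if `v₁ ≠ v₂` in `N₃` have the
same neighborhood in `N₄` containing distinct `wᵢ, wⱼ` with
`N(wᵢ) ∩ N₃ = N(wⱼ) ∩ N₃ = {v₁, v₂}`, then `G` has no e.d.s. containing
`D_basis`. -/
theorem stmt_13 [Fintype V] (G : SimpleGraph V) (X Y : Set V)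
    (hbip : Bipartition G X Y) (hP8 : P8Free G)
    (Dbasis : Set V) (hne : Dbasis.Nonempty)
    (hN5 : lvl G Dbasis 5 = ∅)
    (hN4indep : ∀ a b : V, a ∈ lvl G Dbasis 4 → b ∈ lvl G Dbasis 4 → ¬ G.Adj a b)
    (hN3edge : ∀ a b c : V, a ∈ lvl G Dbasis 3 → b ∈ lvl G Dbasis 3 → G.Adj a b →
        c ∈ lvl G Dbasis 4 → ¬ G.Adj a c)
    (hexcl : ∀ D : Set V, IsEDS G D → Dbasis ⊆ D →
        D ∩ (lvl G Dbasis 1 ∪ lvl G Dbasis 2) = ∅)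
    {v₁ v₂ wi wj : V} (hv₁ : v₁ ∈ lvl G Dbasis 3) (hv₂ : v₂ ∈ lvl G Dbasis 3)
    (hne12 : v₁ ≠ v₂) (hwij : wi ≠ wj)
    (hwi4 : wi ∈ lvl G Dbasis 4) (hwj4 : wj ∈ lvl G Dbasis 4)
    (heqN4 : G.neighborSet v₁ ∩ lvl G Dbasis 4 = G.neighborSet v₂ ∩ lvl G Dbasis 4)
    (hwi1 : wi ∈ G.neighborSet v₁) (hwj1 : wj ∈ G.neighborSet v₁)
    (hNwi : G.neighborSet wi ∩ lvl G Dbasis 3 = {v₁, v₂})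
    (hNwj : G.neighborSet wj ∩ lvl G Dbasis 3 = {v₁, v₂}) :
    ¬ ∃ D : Set V, IsEDS G D ∧ Dbasis ⊆ D := by
  rintro ⟨D, hEDS, hDb⟩
  have hex := hexcl D hEDS hDb
  -- basic adjacency facts
  have hv2mem : v₂ ∈ ({v₁, v₂} : Set V) := Set.mem_insert_iff.mpr (Or.inr rfl)
  have hwiv2 : G.Adj wi v₂ := by
    have : v₂ ∈ G.neighborSet wi ∩ lvl G Dbasis 3 := hNwi ▸ hv2mem
    exact this.1
  have hwjv2 : G.Adj wj v₂ := by
    have : v₂ ∈ G.neighborSet wj ∩ lvl G Dbasis 3 := hNwj ▸ hv2mem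
    exact this.1
  have lvl_ne : ∀ {a b : V} {n m : ℕ}, a ∈ lvl G Dbasis n → b ∈ lvl G Dbasis m →
      n ≠ m → a ≠ b := by
    rintro a b n m ha hb hnm rfl
    have : (n : ℕ∞) = (m : ℕ∞) := (Eq.symm ha).trans hb
    exact hnm (by exact_mod_cast this)
  -- the D-vertex in the closed neighborhood of wi or wj is wi/wj, v₁ or v₂
  have domW : ∀ w : V, w ∈ lvl G Dbasis 4 → G.neighborSet w ∩ lvl G Dbasis 3 = {v₁, v₂} →
      ∀ d, d ∈ D → d ∈ closedNbhd G w → d = w ∨ d = v₁ ∨ d = v₂ := by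
    intro w hw4 hNw d hdD hdN
    rcases Set.mem_insert_iff.mp hdN with rfl | hdn
    · exact Or.inl rfl
    right
    have hadj : G.Adj w d := hdn
    obtain ⟨m, hm, h1, h2⟩ := lvl_adj G hne hw4 hadj
    have hcases : m = 3 ∨ m = 4 ∨ m = 5 := by omega
    rcases hcases with rfl | rfl | rfl
    · have : d ∈ ({v₁, v₂} : Set V) := hNw ▸ ⟨hdn, hm⟩
      exact this
    · exact absurd hadj (hN4indep w d hw4 hm)
    · exact absurd hm (by rw [hN5]; exact Set.notMem_empty d)
  -- the D-vertex for v ∈ {v₁, v₂} is v itself or a common N₄-neighbor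
  have domV : ∀ v, v ∈ lvl G Dbasis 3 → G.Adj v wi → ∀ d, d ∈ D → d ∈ closedNbhd G v →
      d = v ∨ (d ∈ G.neighborSet v ∧ d ∈ lvl G Dbasis 4) := by
    intro v hv3 hvwi d hdD hdN
    rcases Set.mem_insert_iff.mp hdN with rfl | hdn
    · exact Or.inl rfl
    right
    have hadj : G.Adj v d := hdn
    obtain ⟨m, hm, h1, h2⟩ := lvl_adj G hne hv3 hadj
    have hcases : m = 2 ∨ m = 3 ∨ m = 4 := by omega
    rcases hcases with rfl | rfl | rfl
    · exact absurd (hex ▸ (⟨hdD, Or.inr hm⟩ : d ∈ D ∩ (lvl G Dbasis 1 ∪ lvl G Dbasis 2)))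
        (Set.notMem_empty d)
    · exact absurd hvwi (hN3edge v d wi hv3 hm hadj hwi4)
    · exact ⟨hdn, hm⟩
  obtain ⟨di, ⟨hdiD, hdiN⟩, hdiU⟩ := hEDS wi
  rcases domW wi hwi4 hNwi di hdiD hdiN with hdi | hdi | hdi <;> rw [hdi] at hdiD hdiU
  · -- wi ∈ D
    obtain ⟨dj, ⟨hdjD, hdjN⟩, hdjU⟩ := hEDS wj
    rcases domW wj hwj4 hNwj dj hdjD hdjN with hdj | hdj | hdj <;> rw [hdj] at hdjD
    · -- wj ∈ D : v₁ sees both wi, wj in D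
      obtain ⟨f, hf, hfU⟩ := hEDS v₁
      have a := hfU wi ⟨hdiD, Or.inr hwi1⟩
      have b := hfU wj ⟨hdjD, Or.inr hwj1⟩
      exact hwij (a.trans b.symm)
    · -- v₁ ∈ D : wi sees wi and v₁
      have a := hdiU v₁ ⟨hdjD, Or.inr (hwi1 : G.Adj v₁ wi).symm⟩
      exact lvl_ne hv₁ hwi4 (by norm_num) a
    · -- v₂ ∈ D : wi sees wi and v₂
      have a := hdiU v₂ ⟨hdjD, Or.inr hwiv2⟩
      exact lvl_ne hv₂ hwi4 (by norm_num) a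
  · -- v₁ ∈ D
    obtain ⟨e, ⟨heD, heN⟩, heU⟩ := hEDS v₂
    rcases domV v₂ hv₂ hwiv2.symm e heD heN with he | ⟨hen, he4⟩
    · -- v₂ ∈ D as well : wi sees v₁ and v₂ in D
      rw [he] at heD
      have a := hdiU v₂ ⟨heD, Or.inr hwiv2⟩
      exact hne12.symm a
    · -- e ∈ N(v₂) ∩ N₄ = N(v₁) ∩ N₄ : v₁ sees both itself and e
      have he1 : e ∈ G.neighborSet v₁ := by
        have : e ∈ G.neighborSet v₁ ∩ lvl G Dbasis 4 := heqN4 ▸ (⟨hen, he4⟩ :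
          e ∈ G.neighborSet v₂ ∩ lvl G Dbasis 4)
        exact this.1
      obtain ⟨f, hf, hfU⟩ := hEDS v₁
      have a := hfU v₁ ⟨hdiD, Or.inl rfl⟩
      have b := hfU e ⟨heD, Or.inr he1⟩
      exact lvl_ne he4 hv₁ (by norm_num) (b.trans a.symm)
  · -- v₂ ∈ D
    obtain ⟨e, ⟨heD, heN⟩, heU⟩ := hEDS v₁
    rcases domV v₁ hv₁ hwi1 e heD heN with he | ⟨hen, he4⟩
    · -- v₁ ∈ D as well : wi sees v₂ and v₁ in D
      rw [he] at heD
      have a := hdiU v₁ ⟨heD, Or.inr (hwi1 : G.Adj v₁ wi).symm⟩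
      exact hne12 a
    · -- e ∈ N(v₁) ∩ N₄ = N(v₂) ∩ N₄ : v₂ sees both itself and e
      have he2 : e ∈ G.neighborSet v₂ := by
        have : e ∈ G.neighborSet v₂ ∩ lvl G Dbasis 4 := heqN4 ▸ (⟨hen, he4⟩ :
          e ∈ G.neighborSet v₁ ∩ lvl G Dbasis 4)
        exact this.1
      obtain ⟨f, hf, hfU⟩ := hEDS v₂
      have a := hfU v₂ ⟨hdiD, Or.inl rfl⟩
      have b := hfU e ⟨heD, Or.inr he2⟩
      exact lvl_ne he4 hv₂ (by norm_num) (b.trans a.symm)
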